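/- arXiv:1708.03243 — 5 statements merged into one kernel-verified Lean document; each statement's English description precedes it below -/
import Mathlib

section
/- Let g : B^N × B^N → B^N be any map. If the directed graph G̃_g is strongly connected (every vertex can be reached from every vertex by a directed path), then the map G_g is strongly transitive on (X, d): for all points X, Y ∈ X and every ε > 0, there exist a point X' ∈ X with d(X, X') < ε and an integer n ∈ ℕ such that G_g^{∘n}(X') = Y. -/
open scoped BigOperators

/-- N-bit blocks: Boolean vectors of length N. -/
abbrev Block (N : ℕ) := Fin N → Bool

/-- Infinite sequences of N-bit blocks. -/
abbrev Msg (N : ℕ) := ℕ → Block N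

/-- The phase space X = B^N × S_N. -/
abbrev Phase (N : ℕ) := Block N × Msg N

/-- Hamming distance d_e on B^N. -/
noncomputable def dE {N : ℕ} (x y : Block N) : ℝ :=
  ∑ j : Fin N, if x j = y j then (0 : ℝ) else 1

/-- Distance d_m on message sequences. -/
noncomputable def dM {N : ℕ} (m m' : Msg N) : ℝ :=
  (9 / (N : ℝ)) * ∑' k : ℕ, (∑ i : Fin N, if m k i = m' k i then (0 : ℝ) else 1) / 10 ^ (k + 1)

/-- The distance d on the phase space X. -/
noncomputable def dX {N : ℕ} (P Q : Phase N) : ℝ :=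
  dE P.1 Q.1 + dM P.2 Q.2

/-- The shift on message sequences. -/
def shiftMsg {N : ℕ} (m : Msg N) : Msg N := fun k => m (k + 1)

/-- The dynamical system G_g(x, m) = (g(m^0, x), σ(m)). -/
def Gg {N : ℕ} (g : Block N → Block N → Block N) (P : Phase N) : Phase N :=
  (g (P.2 0) P.1, shiftMsg P.2)

def runG {N : ℕ} (g : Block N → Block N → Block N) : Block N → List (Block N) → Block N
  | x, [] => x
  | x, u :: us => runG g (g u x) us

theorem runG_append {N : ℕ} (g : Block N → Block N → Block N) (x : Block N)
    (l₁ l₂ : List (Block N)) : runG g x (l₁ ++ l₂) = runG g (runG g x l₁) l₂ := by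
  induction l₁ generalizing x with
  | nil => rfl
  | cons u us ih => simp [runG, ih]

theorem exists_controls {N : ℕ} (g : Block N → Block N → Block N) {x y : Block N}
    (h : Relation.ReflTransGen (fun a b => ∃ m : Block N, g m a = b) x y) :
    ∃ us : List (Block N), runG g x us = y := by
  induction h with
  | refl => exact ⟨[], rfl⟩
  | tail _ hbc ih =>
    obtain ⟨us, hus⟩ := ih
    obtain ⟨m, hm⟩ := hbc
    exact ⟨us ++ [m], by rw [runG_append, hus]; simpa [runG] using hm⟩

theorem Gg_iter {N : ℕ} (g : Block N → Block N → Block N) (n : ℕ) (x : Block N) (m : Msg N) :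
    (Gg g)^[n] (x, m) = (runG g x ((List.range n).map m), fun k => m (k + n)) := by
  induction n with
  | zero => simp [runG]
  | succ n ih =>
    rw [Function.iterate_succ_apply', ih]
    simp only [Gg, List.range_succ, List.map_append, runG_append, shiftMsg]
    refine Prod.ext ?_ ?_
    · simp [runG, Nat.zero_add]
    · funext k
      show m (k + 1 + n) = m (k + (n + 1))
      rw [show k + 1 + n = k + (n + 1) from by omega]

/-- if the directed graph of g is strongly connected, then G_g is
strongly transitive on (X, d). -/
theorem Gg_strongly_transitive_of_strongly_connected
    {N : ℕ} (hN : 1 ≤ N) (g : Block N → Block N → Block N)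
    (hsc : ∀ x y : Block N, Relation.ReflTransGen (fun a b => ∃ m : Block N, g m a = b) x y) :
    ∀ (P Q : Phase N) (ε : ℝ), 0 < ε →
      ∃ (P' : Phase N) (n : ℕ), dX P P' < ε ∧ (Gg g)^[n] P' = Q := by
  intro P Q ε hε
  obtain ⟨K, hK⟩ := exists_pow_lt_of_lt_one hε (by norm_num : (1/10 : ℝ) < 1)
  set z := runG g P.1 ((List.range K).map P.2) with hz
  obtain ⟨us, hus⟩ := exists_controls g (hsc z Q.1)
  set L := us.length with hL
  set m'' : Msg N := fun k =>
    if k < K then P.2 k else us.getD (k - K) (Q.2 (k - (K + L))) with hm''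
  refine ⟨(P.1, m''), K + L, ?_, ?_⟩
  · -- distance estimate
    have hNpos : (0 : ℝ) < N := by exact_mod_cast Nat.lt_of_lt_of_le Nat.zero_lt_one hN
    have hE : dE P.1 P.1 = 0 := by simp [dE]
    set a : ℕ → ℝ := fun k =>
      (∑ i : Fin N, if P.2 k i = m'' k i then (0 : ℝ) else 1) / 10 ^ (k + 1) with ha
    have ha0 : ∀ k, 0 ≤ a k := by
      intro k
      apply div_nonneg _ (by positivity)
      apply Finset.sum_nonneg
      intro i _
      split <;> norm_num
    have haK : ∀ k, k < K → a k = 0 := by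
      intro k hk
      simp [ha, hm'', hk]
    have hub : ∀ k, a k ≤ (N : ℝ) * (1/10) ^ (k + 1) := by
      intro k
      have h1 : (∑ i : Fin N, if P.2 k i = m'' k i then (0 : ℝ) else 1) ≤ N := by
        calc (∑ i : Fin N, if P.2 k i = m'' k i then (0 : ℝ) else 1)
            ≤ ∑ _i : Fin N, (1 : ℝ) := by
              apply Finset.sum_le_sum; intro i _; split <;> norm_num
          _ = N := by simp
      have h2 : (0 : ℝ) < 10 ^ (k + 1) := by positivity
      rw [ha]
      rw [div_le_iff₀ h2]
      calc (∑ i : Fin N, if P.2 k i = m'' k i then (0 : ℝ) else 1) ≤ N := h1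
        _ = (N : ℝ) * (1/10) ^ (k+1) * 10 ^ (k+1) := by
            rw [mul_assoc, one_div, inv_pow, inv_mul_cancel₀ (by positivity), mul_one]
    have hgs : Summable (fun k : ℕ => (N : ℝ) * (1/10) ^ (k + 1)) := by
      have := (summable_geometric_of_lt_one (by norm_num : (0:ℝ) ≤ 1/10)
        (by norm_num : (1/10 : ℝ) < 1)).mul_left ((N : ℝ) * (1/10))
      refine this.congr fun k => ?_
      rw [pow_succ]
      ring
    have hsa : Summable a := Summable.of_nonneg_of_le ha0 hub hgs
    have hgeo : ∑' k : ℕ, (1/10 : ℝ) ^ k = (1 - 1/10)⁻¹ :=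
      tsum_geometric_of_lt_one (by norm_num) (by norm_num)
    have htail_ub : ∑' k : ℕ, a (k + K) ≤ (N : ℝ) * (1/10) ^ (K + 1) * (1 - 1/10)⁻¹ := by
      have hsum2 : Summable (fun k : ℕ => (N : ℝ) * (1/10) ^ (k + K + 1)) := by
        have := (summable_geometric_of_lt_one (by norm_num : (0:ℝ) ≤ 1/10)
          (by norm_num : (1/10 : ℝ) < 1)).mul_left ((N : ℝ) * (1/10) ^ (K + 1))
        refine this.congr fun k => ?_
        rw [show k + K + 1 = (K + 1) + k from by omega, pow_add]
        ring
      calc ∑' k : ℕ, a (k + K)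
          ≤ ∑' k : ℕ, (N : ℝ) * (1/10) ^ (k + K + 1) :=
            Summable.tsum_le_tsum (fun k => hub (k + K))
              ((summable_nat_add_iff K).2 hsa) hsum2
        _ = ∑' k : ℕ, ((N : ℝ) * (1/10) ^ (K + 1)) * (1/10) ^ k := by
            congr 1; funext k
            rw [show k + K + 1 = (K + 1) + k from by omega, pow_add]
            ring
        _ = ((N : ℝ) * (1/10) ^ (K + 1)) * ∑' k : ℕ, (1/10 : ℝ) ^ k := tsum_mul_left
        _ = (N : ℝ) * (1/10) ^ (K + 1) * (1 - 1/10)⁻¹ := by rw [hgeo]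
    have htsum : ∑' k, a k ≤ (N : ℝ) * (1/10) ^ (K + 1) * (1 - 1/10)⁻¹ := by
      rw [← Summable.sum_add_tsum_nat_add K hsa]
      have : ∑ k ∈ Finset.range K, a k = 0 :=
        Finset.sum_eq_zero fun k hk => haK k (Finset.mem_range.1 hk)
      rw [this, zero_add]
      exact htail_ub
    have hdM : dM P.2 m'' ≤ (1/10 : ℝ) ^ K := by
      have : dM P.2 m'' = (9 / (N : ℝ)) * ∑' k, a k := rfl
      rw [this]
      calc (9 / (N : ℝ)) * ∑' k, a k
          ≤ (9 / (N : ℝ)) * ((N : ℝ) * (1/10) ^ (K + 1) * (1 - 1/10)⁻¹) := by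
            apply mul_le_mul_of_nonneg_left htsum (by positivity)
        _ = (1/10 : ℝ) ^ K := by
            rw [pow_succ]
            field_simp
            ring
      
    show dX P (P.1, m'') < ε
    rw [dX]
    simp only [hE, zero_add]
    exact lt_of_le_of_lt hdM hK
  · -- dynamics
    rw [show (P.1, m'') = (P.1, m'') from rfl]
    have := Gg_iter g (K + L) P.1 m''
    rw [this]
    have hlist : (List.range (K + L)).map m'' = (List.range K).map P.2 ++ us := by
      apply List.ext_getElem
      · simp [hL]
      · intro j h1 h2
        simp only [List.getElem_map, List.getElem_range]
        by_cases hj : j < K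
        · rw [List.getElem_append_left (by simpa using hj)]
          simp [hm'', hj]
        · rw [List.getElem_append_right (by simpa using hj)]
          have hjK : j - K < L := by
            simp only [List.length_map, List.length_range] at h1
            omega
          simp only [hm'', if_neg hj]
          simp [List.getD, List.getElem?_eq_getElem hjK]
    refine Prod.ext ?_ ?_
    · show runG g P.1 ((List.range (K + L)).map m'') = Q.1
      rw [hlist, runG_append, ← hz, hus]
    · funext k
      show m'' (k + (K + L)) = Q.2 k
      have h1 : ¬ (k + (K + L) < K) := by omega
      simp only [hm'', if_neg h1]
      rw [List.getD_eq_default]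
      · rw [Nat.add_sub_cancel]
      · omega
end

section
/- Let g : B^N × B^N → B^N be any map. If the directed graph G̃_g is strongly connected (every vertex can be reached from every vertex by a directed path), then G_g is regular on (X, d): the set of periodic points of G_g (points P such that G_g^{∘n}(P) = P for some n ≥ 1) is dense in X. -/
open scoped BigOperators

namespace GgAux

variable {N : ℕ} (g : Block N → Block N → Block N)

/-- State after feeding blocks `m 0, m 1, …, m (n-1)` starting at `x`. -/
def orbit (m : Msg N) (x : Block N) : ℕ → Block N
  | 0 => x
  | n + 1 => g (m n) (orbit m x n)

/-- State after feeding a finite list of blocks. -/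
def drive (x : Block N) : List (Block N) → Block N
  | [] => x
  | h :: t => drive (g h x) t

lemma drive_append (x : Block N) (l1 l2 : List (Block N)) :
    drive g x (l1 ++ l2) = drive g (drive g x l1) l2 := by
  induction l1 generalizing x with
  | nil => rfl
  | cons h t ih => simp [drive, ih]

lemma iterate_Gg (P : Phase N) (n : ℕ) :
    (Gg g)^[n] P = (orbit g P.2 P.1 n, fun k => P.2 (k + n)) := by
  induction n with
  | zero => simp [orbit]
  | succ n ih =>
    rw [Function.iterate_succ_apply', ih]
    refine Prod.ext ?_ ?_
    · simp [Gg, orbit]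
    · funext k
      show P.2 (k + 1 + n) = P.2 (k + (n + 1))
      have h' : k + 1 + n = k + (n + 1) := by omega
      rw [h']

lemma orbit_congr (m m' : Msg N) (x : Block N) (n : ℕ)
    (h : ∀ k < n, m k = m' k) : orbit g m x n = orbit g m' x n := by
  induction n with
  | zero => rfl
  | succ n ih =>
    simp only [orbit, ih (fun k hk => h k (by omega)), h n (by omega)]

lemma orbit_add (m : Msg N) (x : Block N) (a b : ℕ) :
    orbit g m x (a + b) = orbit g (fun k => m (a + k)) (orbit g m x a) b := by
  induction b with
  | zero => rfl
  | succ b ih =>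
    have h' : a + (b + 1) = (a + b) + 1 := by omega
    rw [h']
    simp only [orbit, ih]

lemma drive_eq_orbit (l : List (Block N)) (x : Block N) :
    drive g x l = orbit g (fun k => l.getD k (fun _ => false)) x l.length := by
  induction l generalizing x with
  | nil => rfl
  | cons h t ih =>
    have h1 : (h :: t).length = 1 + t.length := by simp [Nat.add_comm]
    rw [drive, ih, h1, orbit_add]
    have h2 : orbit g (fun k => (h :: t).getD k (fun _ => false)) x 1 = g h x := by
      simp [orbit, List.getD]
    rw [h2]
    apply orbit_congr
    intro k hk
    show t.getD k _ = (h :: t).getD (1 + k) _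
    rw [Nat.add_comm, List.getD_cons_succ]

lemma exists_drive (a b : Block N)
    (h : Relation.ReflTransGen (fun a b => ∃ m : Block N, g m a = b) a b) :
    ∃ l : List (Block N), drive g a l = b := by
  induction h with
  | refl => exact ⟨[], rfl⟩
  | tail _ hstep ih =>
    obtain ⟨l, hl⟩ := ih
    obtain ⟨mb, hmb⟩ := hstep
    exact ⟨l ++ [mb], by rw [drive_append, hl]; simp [drive, hmb]⟩

lemma dM_le (hN : 1 ≤ N) (m m' : Msg N) (K : ℕ)
    (h : ∀ k < K, m k = m' k) : dM m m' ≤ (1 / 10 : ℝ) ^ K := by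
  have hNpos : (0 : ℝ) < N := by exact_mod_cast hN
  set f : ℕ → ℝ := fun k => (∑ i : Fin N, if m k i = m' k i then (0 : ℝ) else 1) / 10 ^ (k + 1)
    with hf
  set c : ℕ → ℝ := fun k => if k < K then 0 else (N : ℝ) * (1 / 10 : ℝ) ^ (k + 1) with hc
  have hgeo : Summable (fun k : ℕ => (N : ℝ) * (1 / 10 : ℝ) ^ (k + 1)) := by
    have : Summable (fun k : ℕ => (1 / 10 : ℝ) ^ k) :=
      summable_geometric_of_lt_one (by norm_num) (by norm_num)
    exact ((this.mul_left (1 / 10 : ℝ)).congr (fun k => by rw [pow_succ]; ring)).mul_left _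
  have hcs : Summable c := by
    refine Summable.of_nonneg_of_le (fun k => ?_) (fun k => ?_) hgeo
    · by_cases hk : k < K <;> simp [hc, hk] <;> positivity
    · by_cases hk : k < K <;> simp [hc, hk] <;> positivity
  have hfle : ∀ k, f k ≤ c k := by
    intro k
    by_cases hk : k < K
    · simp [hf, hc, hk, h k hk]
    · simp only [hf, hc, hk, if_neg hk]
      rw [div_le_iff₀ (by positivity)]
      calc (∑ i : Fin N, if m k i = m' k i then (0 : ℝ) else 1)
          ≤ ∑ _i : Fin N, (1 : ℝ) := by
            refine Finset.sum_le_sum fun i _ => ?_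
            split <;> norm_num
        _ = (N : ℝ) := by simp
        _ = (N : ℝ) * (1 / 10 : ℝ) ^ (k + 1) * 10 ^ (k + 1) := by
            rw [mul_assoc]
            have h10 : (1 / 10 : ℝ) ^ (k + 1) * (10 : ℝ) ^ (k + 1) = 1 := by
              rw [← mul_pow]; norm_num
            rw [h10, mul_one]

  have hfnn : ∀ k, 0 ≤ f k := by
    intro k
    apply div_nonneg _ (by positivity)
    exact Finset.sum_nonneg fun i _ => by split <;> norm_num
  have hfs : Summable f := Summable.of_nonneg_of_le hfnn hfle hcs
  have hsum : ∑' k, c k = (N : ℝ) * (1 / 10 : ℝ) ^ K / 9 := by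
    have := Summable.sum_add_tsum_nat_add (f := c) K hcs
    have h1 : ∑ i ∈ Finset.range K, c i = 0 := by
      refine Finset.sum_eq_zero fun i hi => ?_
      simp [hc, Finset.mem_range.mp hi]
    have h2 : ∑' i : ℕ, c (i + K) = (N : ℝ) * (1 / 10 : ℝ) ^ K / 9 := by
      have he : ∀ i : ℕ, c (i + K) =
          ((N : ℝ) * (1 / 10 : ℝ) ^ K / 10) * (1 / 10 : ℝ) ^ i := by
        intro i
        simp only [hc, if_neg (by omega : ¬ i + K < K)]
        rw [pow_add, pow_succ]
        ring
      rw [tsum_congr he, tsum_mul_left,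
        tsum_geometric_of_lt_one (by norm_num) (by norm_num)]
      have h910 : (1 - (1 / 10 : ℝ))⁻¹ = 10 / 9 := by norm_num
      rw [h910]
      ring
    rw [← this, h1, h2, zero_add]
  have : ∑' k, f k ≤ (N : ℝ) * (1 / 10 : ℝ) ^ K / 9 := hsum ▸ Summable.tsum_le_tsum hfle hfs hcs
  calc dM m m' = (9 / (N : ℝ)) * ∑' k, f k := rfl
    _ ≤ (9 / (N : ℝ)) * ((N : ℝ) * (1 / 10 : ℝ) ^ K / 9) := by
        gcongr
    _ = (1 / 10 : ℝ) ^ K := by field_simp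
end GgAux

/-- if the directed graph of g is strongly connected, then G_g is regular:
the set of periodic points of G_g is dense in X. -/
theorem Gg_regular_of_strongly_connected
    {N : ℕ} (hN : 1 ≤ N) (g : Block N → Block N → Block N)
    (hsc : ∀ x y : Block N, Relation.ReflTransGen (fun a b => ∃ m : Block N, g m a = b) x y) :
    ∀ (P : Phase N) (ε : ℝ), 0 < ε →
      ∃ (Q : Phase N) (n : ℕ), 1 ≤ n ∧ (Gg g)^[n] Q = Q ∧ dX P Q < ε := by
  rintro ⟨x, m⟩ ε hε
  -- choose K ≥ 1 with (1/10)^K < ε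
  obtain ⟨K0, hK0⟩ := exists_pow_lt_of_lt_one hε (by norm_num : (1 / 10 : ℝ) < 1)
  set K := K0 + 1 with hKdef
  have hKε : (1 / 10 : ℝ) ^ K < ε := by
    calc (1 / 10 : ℝ) ^ K ≤ (1 / 10 : ℝ) ^ K0 := by
          apply pow_le_pow_of_le_one (by norm_num) (by norm_num)
          omega
      _ < ε := hK0
  -- state reached after K steps
  set y := GgAux.orbit g m x K with hy
  obtain ⟨l, hl⟩ := GgAux.exists_drive g y x (hsc y x)
  set L := l.length with hL
  set p := K + L with hp
  have hKp : K ≤ p := by omega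
  have hppos : 1 ≤ p := by omega
  -- the periodic message
  set blk : ℕ → Block N := fun j => if j < K then m j else l.getD (j - K) (fun _ => false)
    with hblk
  set mt : Msg N := fun k => blk (k % p) with hmt
  have hmt_agree : ∀ k < K, mt k = m k := by
    intro k hk
    simp only [hmt, Nat.mod_eq_of_lt (by omega : k < p), hblk, if_pos hk]
  have horb1 : GgAux.orbit g mt x K = y := by
    rw [hy]
    exact GgAux.orbit_congr g mt m x K hmt_agree
  have horb : GgAux.orbit g mt x p = x := by
    rw [hp, GgAux.orbit_add, horb1]
    have : GgAux.orbit g (fun k => mt (K + k)) y L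
        = GgAux.orbit g (fun k => l.getD k (fun _ => false)) y L := by
      apply GgAux.orbit_congr
      intro k hk
      simp only [hmt, hblk]
      rw [Nat.mod_eq_of_lt (by omega : K + k < p)]
      rw [if_neg (by omega : ¬ K + k < K)]
      congr 1
      omega
    rw [this, ← GgAux.drive_eq_orbit, hl]
  have hper : ∀ k, mt (k + p) = mt k := by
    intro k
    simp only [hmt, Nat.add_mod_right]
  refine ⟨(x, mt), p, hppos, ?_, ?_⟩
  · rw [GgAux.iterate_Gg]
    refine Prod.ext horb (funext fun k => hper k)
  · have h1 : dE x x = 0 := by simp [dE]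
    have h2 : dM m mt ≤ (1 / 10 : ℝ) ^ K :=
      GgAux.dM_le hN m mt K (fun k hk => (hmt_agree k hk).symm)
    calc dX (x, m) (x, mt) = dM m mt := by simp [dX, h1]
      _ ≤ (1 / 10 : ℝ) ^ K := h2
      _ < ε := hKε
end

section
/- The CBC mode of operation is sensitive to initial conditions with sensitivity constant at least N: for every point P ∈ X and every δ > 0, there exist a point P' ∈ X with d(P, P') < δ and an integer n ∈ ℕ such that d(G_g^{∘n}(P), G_g^{∘n}(P')) > N. -/
open scoped BigOperators

/-- The CBC iterate function g(m, x) = E_k(x ⊕ m), with ⊕ the bitwise XOR. -/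
def cbcG {N : ℕ} (Ek : Block N → Block N) (m x : Block N) : Block N :=
  Ek (fun j => Bool.xor (x j) (m j))

lemma Gg_iter_snd {N : ℕ} (g : Block N → Block N → Block N) (n : ℕ) (P : Phase N) :
    ((Gg g)^[n] P).2 = fun k => P.2 (k + n) := by
  induction n generalizing P with
  | zero => simp
  | succ n ih =>
    rw [Function.iterate_succ_apply, ih]
    funext k
    show (Gg g P).2 (k + n) = P.2 (k + (n+1))
    simp only [Gg, shiftMsg]
    ring_nf

lemma Gg_iter_fst {N : ℕ} (g : Block N → Block N → Block N) (n : ℕ) (x : Block N)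
    (m m' : Msg N) (h : ∀ k < n, m k = m' k) :
    ((Gg g)^[n] (x, m)).1 = ((Gg g)^[n] (x, m')).1 := by
  induction n generalizing x m m' with
  | zero => rfl
  | succ n ih =>
    rw [Function.iterate_succ_apply, Function.iterate_succ_apply]
    show ((Gg g)^[n] (g (m 0) x, shiftMsg m)).1 = ((Gg g)^[n] (g (m' 0) x, shiftMsg m')).1
    rw [h 0 (Nat.succ_pos n)]
    exact ih _ _ _ (fun k hk => h (k+1) (by omega))

lemma pow_div_eq {N : ℕ} (k : ℕ) : (N:ℝ)/10 * (1/10)^k = (N:ℝ)/10^(k+1) := by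
  rw [div_pow, one_pow, div_mul_div_comm, mul_one, ← pow_succ']

lemma summable_aux {N : ℕ} (f : ℕ → ℝ) (h0 : ∀ k, 0 ≤ f k) (hC : ∀ k, f k ≤ (N : ℝ)) :
    Summable (fun k => f k / 10 ^ (k + 1)) := by
  have hg : Summable (fun k => ((N:ℝ)/10) * (1/10 : ℝ) ^ k) :=
    (summable_geometric_of_lt_one (by norm_num) (by norm_num)).mul_left _
  refine hg.of_nonneg_of_le (fun k => div_nonneg (h0 k) (by positivity)) (fun k => ?_)
  rw [pow_div_eq]
  gcongr
  exact hC k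


/-- the CBC mode of operation is sensitive to initial conditions with
sensitivity constant at least N. -/
theorem cbc_sensitive
    {N : ℕ} (hN : 1 ≤ N) (Ek : Block N → Block N) (hEk : Function.Bijective Ek) :
    ∀ (P : Phase N) (δ : ℝ), 0 < δ →
      ∃ (P' : Phase N) (n : ℕ), dX P P' < δ ∧
        dX ((Gg (cbcG Ek))^[n] P) ((Gg (cbcG Ek))^[n] P') > (N : ℝ) := by
  rintro ⟨x, m⟩ δ hδ
  have hNpos : (0:ℝ) < N := by exact_mod_cast hN
  obtain ⟨n, hn⟩ : ∃ n : ℕ, (1/10:ℝ)^n < δ := exists_pow_lt_of_lt_one hδ (by norm_num)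
  set G := Gg (cbcG Ek) with hG
  set xn : Block N := (G^[n] (x, m)).1 with hxn
  obtain ⟨u, hu⟩ := hEk.2 (fun j => !(cbcG Ek (m n) xn j))
  set m' : Msg N := fun k =>
    if k < n then m k else if k = n then (fun j => xor (xn j) (u j)) else (fun j => !(m k j))
    with hm'
  refine ⟨(x, m'), n + 1, ?_, ?_⟩
  · -- small perturbation
    have hdEx : dE x x = 0 := by simp [dE]
    set f : ℕ → ℝ := fun k => ∑ i : Fin N, if m k i = m' k i then (0:ℝ) else 1 with hf
    have hf0 : ∀ k, 0 ≤ f k := fun k =>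
      Finset.sum_nonneg (fun i _ => by split <;> norm_num)
    have hfN : ∀ k, f k ≤ (N : ℝ) := by
      intro k
      calc f k ≤ ∑ _i : Fin N, (1:ℝ) := Finset.sum_le_sum (fun i _ => by split <;> norm_num)
        _ = N := by simp
    have hfz : ∀ k < n, f k = 0 := by
      intro k hk
      simp only [hf, hm']
      rw [if_pos hk]
      simp
    have hsum := summable_aux (N := N) f hf0 hfN
    have hsplit := (Summable.sum_add_tsum_nat_add (f := fun k => f k / 10 ^ (k+1)) n hsum).symm
    have hfin : ∑ k ∈ Finset.range n, f k / 10 ^ (k+1) = 0 := by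
      apply Finset.sum_eq_zero
      intro k hk
      rw [hfz k (Finset.mem_range.mp hk)]
      simp
    have hsum' : Summable (fun k => f (k+n) / (10:ℝ) ^ (k + n + 1)) :=
      (summable_nat_add_iff (f := fun k => f k / (10:ℝ)^(k+1)) n).mpr hsum
    have hgeo : Summable (fun k => (N:ℝ)/10^n * (1/10 * (1/10:ℝ)^k)) := by
      apply Summable.mul_left
      exact (summable_geometric_of_lt_one (by norm_num) (by norm_num)).mul_left _
    have htail_le : ∑' k : ℕ, f (k + n) / 10 ^ (k + n + 1) ≤ (N:ℝ)/10^n * (1/9) := by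
      calc ∑' k : ℕ, f (k + n) / 10 ^ (k + n + 1)
          ≤ ∑' k : ℕ, (N:ℝ)/10^n * (1/10 * (1/10:ℝ)^k) := by
            apply Summable.tsum_le_tsum _ hsum' hgeo
            intro k
            have heq : (N:ℝ)/10^n * (1/10 * (1/10)^k) = (N:ℝ)/10^(k+n+1) := by
              rw [div_pow, one_pow, div_mul_div_comm, one_mul, div_mul_div_comm, mul_one]
              rw [show (10:ℝ)^n * (10 * 10^k) = 10^(k+n+1) by ring]
            rw [heq]
            gcongr
            exact hfN _
        _ = (N:ℝ)/10^n * (1/10 * ∑' k : ℕ, (1/10:ℝ)^k) := by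
            rw [tsum_mul_left, tsum_mul_left]
        _ = (N:ℝ)/10^n * (1/9) := by
            rw [tsum_geometric_of_lt_one (by norm_num) (by norm_num)]
            norm_num
    have hdm : dM m m' ≤ (1/10:ℝ)^n := by
      unfold dM
      show (9 / (N:ℝ)) * (∑' k : ℕ, f k / 10 ^ (k+1)) ≤ (1/10:ℝ)^n
      rw [hsplit, hfin, zero_add]
      calc (9 / (N:ℝ)) * ∑' k : ℕ, f (k + n) / 10 ^ (k + n + 1)
          ≤ (9 / (N:ℝ)) * ((N:ℝ)/10^n * (1/9)) :=
            mul_le_mul_of_nonneg_left htail_le (by positivity)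
        _ = (1/10)^n := by
            rw [div_pow, one_pow]
            field_simp
    calc dX (x, m) (x, m') = dM m m' := by simp [dX, hdEx]
      _ ≤ (1/10)^n := hdm
      _ < δ := hn
  · -- sensitivity
    set Q := G^[n+1] (x, m) with hQ
    set Q' := G^[n+1] (x, m') with hQ'
    have hagree : ∀ k < n, m k = m' k := by
      intro k hk
      simp only [hm', if_pos hk]
    have hfst' : (G^[n] (x, m')).1 = xn := (Gg_iter_fst _ n x m m' hagree).symm
    have hQ1 : Q.1 = cbcG Ek (m n) xn := by
      rw [hQ, hG, Function.iterate_succ_apply']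
      show cbcG Ek (((Gg (cbcG Ek))^[n] (x,m)).2 0) ((Gg (cbcG Ek))^[n] (x,m)).1 = _
      rw [Gg_iter_snd]
      rw [← hG, ← hxn]
      norm_num
    have hQ'1 : Q'.1 = fun j => !(Q.1 j) := by
      rw [hQ', hG, Function.iterate_succ_apply']
      show cbcG Ek (((Gg (cbcG Ek))^[n] (x,m')).2 0) ((Gg (cbcG Ek))^[n] (x,m')).1 = _
      rw [Gg_iter_snd, ← hG, hfst']
      show cbcG Ek (m' (0 + n)) xn = _
      have hm'n : m' (0 + n) = fun j => xor (xn j) (u j) := by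
        simp [hm']
      rw [hm'n, hQ1]
      show Ek (fun j => xor (xn j) (xor (xn j) (u j))) = _
      rw [show (fun j => xor (xn j) (xor (xn j) (u j))) = u from
        funext fun j => by cases xn j <;> cases u j <;> rfl]
      rw [hu]
    have hdE : dE Q.1 Q'.1 = N := by
      unfold dE
      simp only [hQ'1]
      calc ∑ j : Fin N, (if Q.1 j = !(Q.1 j) then (0:ℝ) else 1)
          = ∑ _j : Fin N, (1:ℝ) :=
            Finset.sum_congr rfl (fun j _ => by
              rw [if_neg (by cases Q.1 j <;> simp)])
        _ = N := by simp
    have hQ2 : Q.2 = fun k => m (k + (n+1)) := by rw [hQ, hG, Gg_iter_snd]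
    have hQ'2 : Q'.2 = fun k => (fun j => !(m (k + (n+1)) j)) := by
      rw [hQ', hG, Gg_iter_snd]
      funext k
      have h1 : ¬ (k + (n+1) < n) := by omega
      have h2 : ¬ (k + (n+1) = n) := by omega
      simp only [hm', if_neg h1, if_neg h2]
    have hterm : ∀ k, (∑ i : Fin N, if Q.2 k i = Q'.2 k i then (0:ℝ) else 1) = N := by
      intro k
      rw [hQ2, hQ'2]
      have : ∀ i : Fin N, (if m (k+(n+1)) i = !(m (k+(n+1)) i) then (0:ℝ) else 1) = 1 := by
        intro i
        rw [if_neg (by cases m (k+(n+1)) i <;> simp)]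
      rw [Finset.sum_congr rfl (fun i _ => this i)]
      simp
    have hsumQ : Summable (fun k => (∑ i : Fin N, if Q.2 k i = Q'.2 k i then (0:ℝ) else 1) / 10 ^ (k+1)) := by
      apply summable_aux (N := N)
      · intro k; rw [hterm k]; positivity
      · intro k; rw [hterm k]
    have hdM : dM Q.2 Q'.2 ≥ 9/10 := by
      unfold dM
      have h0le : (∑ i : Fin N, if Q.2 0 i = Q'.2 0 i then (0:ℝ) else 1) / 10 ^ (0+1)
          ≤ ∑' k : ℕ, (∑ i : Fin N, if Q.2 k i = Q'.2 k i then (0:ℝ) else 1) / 10 ^ (k+1) :=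
        Summable.le_tsum hsumQ 0 (fun i _ => by rw [hterm i]; positivity)
      rw [hterm 0] at h0le
      have : (9 / (N:ℝ)) * ((N:ℝ) / 10 ^ (0+1)) ≤ (9 / (N:ℝ)) * ∑' k : ℕ,
          (∑ i : Fin N, if Q.2 k i = Q'.2 k i then (0:ℝ) else 1) / 10 ^ (k+1) :=
        mul_le_mul_of_nonneg_left h0le (by positivity)
      have heq : (9 / (N:ℝ)) * ((N:ℝ) / 10 ^ (0+1)) = 9/10 := by
        field_simp
        norm_num
      linarith
    have : dX Q Q' = dE Q.1 Q'.1 + dM Q.2 Q'.2 := rfl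
    rw [this, hdE]
    linarith
end

section
/- For the CBC mode of operation, the image of any open ball eventually covers the whole space: for every point P ∈ X and every ε > 0, there exists an integer n ∈ ℕ such that G_g^{∘n}(B(P, ε)) = X, where B(P, ε) = {Q ∈ X : d(P, Q) < ε} is the open ball of center P and radius ε. -/
open scoped BigOperators

lemma iter_snd {N : ℕ} (g : Block N → Block N → Block N) (Q : Phase N) (j : ℕ) :
    ((Gg g)^[j] Q).2 = fun k => Q.2 (k + j) := by
  induction j generalizing Q with
  | zero => simp
  | succ j ih =>
    rw [Function.iterate_succ_apply, ih]
    funext k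
    show (Gg g Q).2 (k + j) = Q.2 (k + (j + 1))
    simp [Gg, shiftMsg]; ring_nf

lemma iter_fst_congr {N : ℕ} (g : Block N → Block N → Block N) (x : Block N)
    (m m' : Msg N) (j : ℕ) (h : ∀ k < j, m k = m' k) :
    ((Gg g)^[j] (x, m)).1 = ((Gg g)^[j] (x, m')).1 := by
  induction j generalizing x m m' with
  | zero => rfl
  | succ j ih =>
    rw [Function.iterate_succ_apply, Function.iterate_succ_apply]
    have h0 : m 0 = m' 0 := h 0 (Nat.succ_pos j)
    show ((Gg g)^[j] (g (m 0) x, shiftMsg m)).1 = ((Gg g)^[j] (g (m' 0) x, shiftMsg m')).1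
    rw [h0]
    exact ih _ _ _ (fun k hk => h (k + 1) (by omega))

lemma geom_ninth : ∑' k : ℕ, ((1:ℝ)/10) ^ (k+1) = 1/9 := by
  have h := tsum_geometric_of_lt_one (by norm_num : (0:ℝ) ≤ 1/10) (by norm_num)
  calc ∑' k : ℕ, ((1:ℝ)/10) ^ (k+1) = ∑' k : ℕ, (1/10) * ((1:ℝ)/10) ^ k := by
        congr 1; funext k; rw [pow_succ, mul_comm]
    _ = (1/10) * ∑' k : ℕ, ((1:ℝ)/10) ^ k := tsum_mul_left
    _ = 1/9 := by rw [h]; norm_num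

lemma dM_le' {N : ℕ} (hN : 1 ≤ N) (m m' : Msg N) (n : ℕ) (h : ∀ k < n, m k = m' k) :
    dM m m' ≤ (1/10 : ℝ) ^ n := by
  set f : ℕ → ℝ := fun k => (∑ i : Fin N, if m k i = m' k i then (0 : ℝ) else 1) / 10 ^ (k + 1)
    with hf
  have hf0 : ∀ k, 0 ≤ f k := by
    intro k
    apply div_nonneg _ (by positivity)
    exact Finset.sum_nonneg fun i _ => by positivity
  have hfle : ∀ k, f k ≤ (N : ℝ) * (1/10) ^ (k+1) := by
    intro k
    have hs : (∑ i : Fin N, if m k i = m' k i then (0:ℝ) else 1) ≤ N := by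
      calc (∑ i : Fin N, if m k i = m' k i then (0:ℝ) else 1)
          ≤ ∑ _i : Fin N, (1:ℝ) := Finset.sum_le_sum (fun i _ => by split <;> norm_num)
        _ = N := by simp
    have : ((N:ℝ) * (1/10)^(k+1)) = (N:ℝ) / 10 ^ (k+1) := by
      rw [div_pow, one_pow]; ring
    rw [this, hf]
    exact div_le_div_of_nonneg_right hs (by positivity) |>.trans_eq rfl
  have hgsum : Summable (fun k : ℕ => (N:ℝ) * (1/10)^(k+1)) := by
    apply Summable.mul_left
    exact (summable_geometric_of_lt_one (by norm_num) (by norm_num)).comp_injective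
      (add_left_injective 1)
  have hfsum : Summable f := Summable.of_nonneg_of_le hf0 hfle hgsum
  have hzero : ∀ k < n, f k = 0 := by
    intro k hk
    simp only [hf, h k hk]
    simp
  have hsplit := (Summable.sum_add_tsum_nat_add n hfsum).symm
  have hfirst : ∑ k ∈ Finset.range n, f k = 0 :=
    Finset.sum_eq_zero fun k hk => hzero k (Finset.mem_range.mp hk)
  have htail : ∑' k : ℕ, f (k + n) ≤ (N:ℝ) * (1/10)^n * (1/9) := by
    have hle : ∀ k : ℕ, f (k + n) ≤ (N:ℝ) * (1/10)^n * (1/10)^(k+1) := by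
      intro k
      calc f (k+n) ≤ (N:ℝ) * (1/10)^(k+n+1) := hfle (k+n)
        _ = (N:ℝ) * (1/10)^n * (1/10)^(k+1) := by ring
    have hgsum2 : Summable (fun k : ℕ => (N:ℝ) * (1/10)^n * (1/10)^(k+1)) := by
      apply Summable.mul_left
      exact (summable_geometric_of_lt_one (by norm_num) (by norm_num)).comp_injective
        (add_left_injective 1)
    calc ∑' k : ℕ, f (k + n) ≤ ∑' k : ℕ, (N:ℝ) * (1/10)^n * (1/10)^(k+1) :=
          Summable.tsum_le_tsum hle (hfsum.comp_injective (add_left_injective n)) hgsum2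
      _ = (N:ℝ) * (1/10)^n * ∑' k : ℕ, ((1:ℝ)/10)^(k+1) := tsum_mul_left
      _ = (N:ℝ) * (1/10)^n * (1/9) := by rw [geom_ninth]
  have hNpos : (0:ℝ) < N := by exact_mod_cast hN
  have : ∑' k, f k ≤ (N:ℝ) * (1/10)^n * (1/9) := by
    rw [hsplit, hfirst, zero_add]; exact htail
  calc dM m m' = (9 / (N:ℝ)) * ∑' k, f k := rfl
    _ ≤ (9 / (N:ℝ)) * ((N:ℝ) * (1/10)^n * (1/9)) := by
        apply mul_le_mul_of_nonneg_left this (by positivity)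
    _ = (1/10)^n := by field_simp

/-- for the CBC mode, the image of any open ball eventually covers X. -/
theorem cbc_ball_image_covers
    {N : ℕ} (hN : 1 ≤ N) (Ek : Block N → Block N) (hEk : Function.Bijective Ek) :
    ∀ (P : Phase N) (ε : ℝ), 0 < ε →
      ∃ n : ℕ, (Gg (cbcG Ek))^[n] '' {Q : Phase N | dX P Q < ε} = Set.univ := by
  intro P ε hε
  obtain ⟨n, hn⟩ : ∃ n : ℕ, (1/10 : ℝ) ^ n < ε :=
    exists_pow_lt_of_lt_one hε (by norm_num)
  refine ⟨n + 1, Set.eq_univ_of_forall fun R => ?_⟩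
  obtain ⟨y, mb⟩ := R
  set c : Block N := ((Gg (cbcG Ek))^[n] (P.1, P.2)).1 with hc
  obtain ⟨z, hz⟩ := hEk.2 y
  set w : Block N := fun j => Bool.xor (c j) (z j) with hw
  set m' : Msg N := fun k => if k < n then P.2 k else if k = n then w else mb (k - (n+1))
    with hm'
  have hagree : ∀ k < n, P.2 k = m' k := by
    intro k hk; simp [hm', hk]
  refine ⟨(P.1, m'), ?_, ?_⟩
  · show dX P (P.1, m') < ε
    have h1 : dE P.1 P.1 = 0 := by simp [dE]
    have h2 : dM P.2 m' ≤ (1/10:ℝ)^n := dM_le' hN _ _ n hagree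
    calc dX P (P.1, m') = dE P.1 P.1 + dM P.2 m' := rfl
      _ = dM P.2 m' := by rw [h1, zero_add]
      _ ≤ (1/10:ℝ)^n := h2
      _ < ε := hn
  · -- iterate
    rw [Function.iterate_succ_apply']
    have hstep : (Gg (cbcG Ek))^[n] (P.1, m') = (c, fun k => m' (k + n)) := by
      apply Prod.ext
      · rw [hc]
        exact iter_fst_congr _ _ _ _ n (fun k hk => (hagree k hk).symm)
      · exact iter_snd _ _ n
    rw [hstep]
    have hm'n : m' n = w := by simp [hm']
    apply Prod.ext
    · show cbcG Ek (m' (0 + n)) c = y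
      rw [zero_add, hm'n, hw]
      show Ek (fun j => Bool.xor (c j) (Bool.xor (c j) (z j))) = y
      have : (fun j => Bool.xor (c j) (Bool.xor (c j) (z j))) = z := by
        funext j; cases c j <;> cases z j <;> rfl
      rw [this, hz]
    · show shiftMsg (fun k => m' (k + n)) = mb
      funext k
      show m' (k + 1 + n) = mb k
      have h1 : ¬ (k + 1 + n < n) := by omega
      have h2 : ¬ (k + 1 + n = n) := by omega
      have h3 : k + 1 + n - (n + 1) = k := by omega
      simp only [hm', h1, h2, if_false, h3]
end

section
/- For the CBC mode of operation and every integer n ≥ 1, there exists an (n, 1)-separated set for G_g in X of cardinality 2^{N·n}: a set E ⊆ X with |E| = 2^{N·n} such that any two distinct points P, Q ∈ E satisfy max_{0 ≤ i < n} d(G_g^{∘i}(P), G_g^{∘i}(Q)) ≥ 1. (One such set consists of the points (x, m) where x ∈ B^N and the first n−1 blocks m^0, …, m^{n−2} range over all of (B^N)^{n−1}, all remaining blocks being the zero block.) -/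
open scoped BigOperators

lemma iterate_snd {N : ℕ} (g : Block N → Block N → Block N) (P : Phase N) (i k : ℕ) :
    ((Gg g)^[i] P).2 k = P.2 (k + i) := by
  induction i generalizing P with
  | zero => simp
  | succ i ih =>
    rw [Function.iterate_succ_apply, ih]
    simp only [Gg, shiftMsg]
    congr 1

lemma iterate_fst_succ {N : ℕ} (g : Block N → Block N → Block N) (P : Phase N) (i : ℕ) :
    ((Gg g)^[i+1] P).1 = g (P.2 i) ((Gg g)^[i] P).1 := by
  rw [Function.iterate_succ_apply']
  simp [Gg, iterate_snd]

lemma dE_ge_one {N : ℕ} {x y : Block N} (h : x ≠ y) : 1 ≤ dE x y := by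
  obtain ⟨j, hj⟩ : ∃ j, x j ≠ y j := by
    by_contra hc
    push_neg at hc
    exact h (funext hc)
  have := Finset.single_le_sum (f := fun j : Fin N => if x j = y j then (0:ℝ) else 1)
    (fun i _ => by positivity) (Finset.mem_univ j)
  simp only [if_neg hj] at this
  simpa [dE] using this

lemma dM_nonneg {N : ℕ} (m m' : Msg N) : 0 ≤ dM m m' := by
  apply mul_nonneg (by positivity)
  apply tsum_nonneg
  intro k
  positivity

theorem cbc_separated_set
    {N : ℕ} (hN : 1 ≤ N) (Ek : Block N → Block N) (hEk : Function.Bijective Ek) :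
    ∀ n : ℕ, 1 ≤ n → ∃ E : Set (Phase N), E.ncard = 2 ^ (N * n) ∧
      ∀ P ∈ E, ∀ Q ∈ E, P ≠ Q →
        ∃ i : ℕ, i < n ∧ 1 ≤ dX ((Gg (cbcG Ek))^[i] P) ((Gg (cbcG Ek))^[i] Q) := by
  intro n hn
  set φ : (Fin n → Block N) → Phase N := fun v =>
    (v ⟨0, hn⟩, fun k => if h : k + 1 < n then v ⟨k + 1, h⟩ else fun _ => false) with hφdef
  have hφ : Function.Injective φ := by
    intro v w hvw
    have h1 : v ⟨0, hn⟩ = w ⟨0, hn⟩ := congrArg Prod.fst hvw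
    have h2 := congrArg Prod.snd hvw
    funext ⟨j, hj⟩
    rcases Nat.eq_zero_or_pos j with rfl | hjpos
    · exact h1
    · obtain ⟨k, rfl⟩ := Nat.exists_eq_add_of_lt hjpos
      have := congrFun h2 k
      simp only [hφdef] at this
      rw [dif_pos (by omega), dif_pos (by omega)] at this
      simpa using this
  refine ⟨Set.range φ, ?_, ?_⟩
  · rw [← Nat.card_coe_set_eq, Nat.card_range_of_injective hφ,
      Nat.card_eq_fintype_card]
    simp [pow_mul, mul_comm]
  · rintro P ⟨v, rfl⟩ Q ⟨w, rfl⟩ hPQ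
    by_contra hc
    push_neg at hc
    apply hPQ
    have hfst : ∀ i < n, ((Gg (cbcG Ek))^[i] (φ v)).1 = ((Gg (cbcG Ek))^[i] (φ w)).1 := by
      intro i hi
      by_contra hne
      have := dE_ge_one hne
      have h2 := dM_nonneg (((Gg (cbcG Ek))^[i] (φ v)).2) (((Gg (cbcG Ek))^[i] (φ w)).2)
      have := hc i hi
      simp only [dX] at this
      linarith
    have hx : (φ v).1 = (φ w).1 := by simpa using hfst 0 (by omega)
    have hm : ∀ k, k + 1 < n → (φ v).2 k = (φ w).2 k := by
      intro k hk
      have ha := hfst k (by omega)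
      have hb := hfst (k + 1) hk
      rw [iterate_fst_succ, iterate_fst_succ] at hb
      simp only [cbcG] at hb
      have hfun := hEk.1 hb
      funext j
      have := congrFun hfun j
      rw [ha] at this
      rcases Bool.eq_false_or_eq_true (((Gg (cbcG Ek))^[k] (φ w)).1 j) with h | h <;>
        simp [h] at this <;> exact this
    have : (φ v).2 = (φ w).2 := by
      funext k
      by_cases hk : k + 1 < n
      · exact hm k hk
      · simp only [hφdef, dif_neg hk]
    exact Prod.ext hx this
end
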